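/- Let y < x0 be real numbers. Suppose that for all t in the closed interval [y, x0] one has b(-t) ≠ 0 and ctil(t) > 0, and suppose that a(-x0)*b(-x0) >= 0. Then a(-y)/b(-y) > 0; in particular a(-y) ≠ 0. -/

import Mathlib

lemma cubic_hasDerivAt (p q r s x : ℝ) :
    HasDerivAt (fun t : ℝ => p * t ^ 3 + q * t ^ 2 + r * t + s)
      (3 * p * x ^ 2 + 2 * q * x + r) x := by
  have h := ((((hasDerivAt_pow 3 x).const_mul p).add
      ((hasDerivAt_pow 2 x).const_mul q)).add
      ((hasDerivAt_id x).const_mul r)).add_const s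
  refine h.congr_deriv ?_
  push_cast; (try simp only [id_eq]); ring

/-- if `b(-t) ≠ 0` and `ctil(t) > 0` throughout `[y, x0]` and
`a(-x0)*b(-x0) ≥ 0`, then `a(-y)/b(-y) > 0`; in particular `a(-y) ≠ 0`. -/
theorem stmt_13 (a0 a1 a2 a3 b0 b1 b2 b3 : ℝ)
    (a b : ℝ → ℝ)
    (ha : ∀ s, a s = a3 * s ^ 3 + a2 * s ^ 2 + a1 * s + a0)
    (hb : ∀ s, b s = b3 * s ^ 3 + b2 * s ^ 2 + b1 * s + b0)
    (c0 c1 c2 : ℝ → ℝ)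
    (hc : ∀ x s : ℝ, (c2 x * s ^ 2 + c1 x * s + c0 x) * (s + x)
        = a s * b (-x) - b s * a (-x))
    (ctil : ℝ → ℝ)
    (hctil : ∀ x, ctil x = c2 x * x ^ 2 - c1 x * x + c0 x)
    (y x0 : ℝ) (hyx : y < x0)
    (hIcc : ∀ t ∈ Set.Icc y x0, b (-t) ≠ 0 ∧ 0 < ctil t)
    (hx0 : 0 ≤ a (-x0) * b (-x0)) :
    0 < a (-y) / b (-y) ∧ a (-y) ≠ 0 := by
  -- key algebraic identity: ctil x = a'(-x) b(-x) - b'(-x) a(-x)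
  have hkey : ∀ x : ℝ, ctil x =
      (3 * a3 * x ^ 2 - 2 * a2 * x + a1) * b (-x)
        - (3 * b3 * x ^ 2 - 2 * b2 * x + b1) * a (-x) := by
    intro x
    have hFeq : (fun s : ℝ => (c2 x * s ^ 2 + c1 x * s + c0 x) * (s + x))
        = fun s : ℝ => a s * b (-x) - b s * a (-x) := funext (hc x)
    have hq : HasDerivAt (fun s : ℝ => c2 x * s ^ 2 + c1 x * s + c0 x)
        (2 * c2 x * (-x) + c1 x) (-x) := by
      have h := (((hasDerivAt_pow 2 (-x)).const_mul (c2 x)).add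
          ((hasDerivAt_id (-x)).const_mul (c1 x))).add_const (c0 x)
      refine h.congr_deriv ?_
      push_cast; (try simp only [id_eq]); ring
    have hF : HasDerivAt (fun s : ℝ => (c2 x * s ^ 2 + c1 x * s + c0 x) * (s + x))
        (ctil x) (-x) := by
      have h := hq.mul ((hasDerivAt_id (-x)).add_const x)
      refine h.congr_deriv ?_
      (try simp only [id_eq]); rw [hctil]; ring
    have hGeq : (fun s : ℝ => a s * b (-x) - b s * a (-x))
        = fun s : ℝ => (a3 * b (-x) - b3 * a (-x)) * s ^ 3
            + (a2 * b (-x) - b2 * a (-x)) * s ^ 2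
            + (a1 * b (-x) - b1 * a (-x)) * s
            + (a0 * b (-x) - b0 * a (-x)) := by
      funext s; rw [ha s, hb s]; ring
    have hG : HasDerivAt (fun s : ℝ => a s * b (-x) - b s * a (-x))
        ((3 * a3 * x ^ 2 - 2 * a2 * x + a1) * b (-x)
          - (3 * b3 * x ^ 2 - 2 * b2 * x + b1) * a (-x)) (-x) := by
      rw [hGeq]
      have h := cubic_hasDerivAt (a3 * b (-x) - b3 * a (-x))
        (a2 * b (-x) - b2 * a (-x)) (a1 * b (-x) - b1 * a (-x))
        (a0 * b (-x) - b0 * a (-x)) (-x)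
      convert h using 1
      ring
    have hF' : HasDerivAt (fun s : ℝ => a s * b (-x) - b s * a (-x))
        (ctil x) (-x) := by rw [← hFeq]; exact hF
    exact hF'.unique hG
  -- derivative of f t = a(-t)/b(-t)
  have hAeq : (fun t : ℝ => a (-t))
      = fun t : ℝ => (-a3) * t ^ 3 + a2 * t ^ 2 + (-a1) * t + a0 := by
    funext t; rw [ha]; ring
  have hBeq : (fun t : ℝ => b (-t))
      = fun t : ℝ => (-b3) * t ^ 3 + b2 * t ^ 2 + (-b1) * t + b0 := by
    funext t; rw [hb]; ring
  set f : ℝ → ℝ := fun t => a (-t) / b (-t) with hf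
  have hderiv : ∀ t ∈ Set.Icc y x0, HasDerivAt f (-(ctil t) / (b (-t)) ^ 2) t := by
    intro t ht
    obtain ⟨hbne, hcpos⟩ := hIcc t ht
    have hA : HasDerivAt (fun t : ℝ => a (-t)) (-(3 * a3 * t ^ 2 - 2 * a2 * t + a1)) t := by
      rw [hAeq]
      have h := cubic_hasDerivAt (-a3) a2 (-a1) a0 t
      convert h using 1; ring
    have hB : HasDerivAt (fun t : ℝ => b (-t)) (-(3 * b3 * t ^ 2 - 2 * b2 * t + b1)) t := by
      rw [hBeq]
      have h := cubic_hasDerivAt (-b3) b2 (-b1) b0 t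
      convert h using 1; ring
    have h := hA.div hB hbne
    refine h.congr_deriv ?_
    rw [hkey t]; ring
  have hanti : StrictAntiOn f (Set.Icc y x0) := by
    apply strictAntiOn_of_deriv_neg (convex_Icc y x0)
    · intro t ht
      exact (hderiv t ht).continuousAt.continuousWithinAt
    · intro t ht
      rw [interior_Icc] at ht
      have ht' : t ∈ Set.Icc y x0 := Set.mem_Icc_of_Ioo ht
      rw [(hderiv t ht').deriv]
      obtain ⟨hbne, hcpos⟩ := hIcc t ht'
      apply div_neg_of_neg_of_pos (by linarith)
      positivity
  have hy : y ∈ Set.Icc y x0 := Set.left_mem_Icc.mpr hyx.le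
  have hx0' : x0 ∈ Set.Icc y x0 := Set.right_mem_Icc.mpr hyx.le
  have hlt : f x0 < f y := hanti hy hx0' hyx
  have hbx0 := (hIcc x0 hx0').1
  have hfx0 : 0 ≤ f x0 := by
    have : f x0 = a (-x0) * b (-x0) / (b (-x0)) ^ 2 := by
      rw [hf]; field_simp
    rw [this]
    positivity
  have hfy : 0 < f y := lt_of_le_of_lt hfx0 hlt
  refine ⟨hfy, ?_⟩
  intro h
  rw [hf] at hfy
  simp only [h, zero_div] at hfy
  exact lt_irrefl 0 hfy
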